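/- For every real x > 0, min( 4·0.61·x²/(5 + 0.61·x²)² , 4·0.61·x²/((1 + x/√2)² + 0.61·x²)² ) ≤ 1/6.3, and the two expressions are equal when x = √2·(√5 − 1). -/

import Mathlib

theorem boundary_min_bound :
    (∀ x : ℝ, 0 < x →
      min (4 * 0.61 * x ^ 2 / (5 + 0.61 * x ^ 2) ^ 2)
          (4 * 0.61 * x ^ 2 / ((1 + x / Real.sqrt 2) ^ 2 + 0.61 * x ^ 2) ^ 2) ≤ 1 / 6.3) ∧
    (4 * 0.61 * (Real.sqrt 2 * (Real.sqrt 5 - 1)) ^ 2 /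
        (5 + 0.61 * (Real.sqrt 2 * (Real.sqrt 5 - 1)) ^ 2) ^ 2 =
      4 * 0.61 * (Real.sqrt 2 * (Real.sqrt 5 - 1)) ^ 2 /
        ((1 + (Real.sqrt 2 * (Real.sqrt 5 - 1)) / Real.sqrt 2) ^ 2 +
          0.61 * (Real.sqrt 2 * (Real.sqrt 5 - 1)) ^ 2) ^ 2) := by
  have h2 : (Real.sqrt 2) ^ 2 = 2 := Real.sq_sqrt (by norm_num)
  have h5 : (Real.sqrt 5) ^ 2 = 5 := Real.sq_sqrt (by norm_num)
  have h2pos : (0:ℝ) < Real.sqrt 2 := Real.sqrt_pos.mpr (by norm_num)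
  have h5lb : (2.2360679:ℝ) < Real.sqrt 5 := by
    nlinarith [h5, Real.sqrt_nonneg 5]
  have h5ub : Real.sqrt 5 < 2.2360680 := by
    nlinarith [h5, Real.sqrt_nonneg 5]
  have hcr : (1 + (Real.sqrt 2 * (Real.sqrt 5 - 1)) / Real.sqrt 2) = Real.sqrt 5 := by
    field_simp
    ring
  constructor
  · intro x hx
    by_cases hcase : x ≤ Real.sqrt 2 * (Real.sqrt 5 - 1)
    · apply le_trans (min_le_left _ _)
      rw [div_le_div_iff₀ (by positivity) (by norm_num)]
      have hxsq : x ^ 2 ≤ 12 - 4 * Real.sqrt 5 := by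
        nlinarith [hx, hcase, h2, h5, Real.sqrt_nonneg 2, Real.sqrt_nonneg 5]
      nlinarith [hxsq, h5ub, sq_nonneg x, sq_nonneg (x^2 - 3)]
    · apply le_trans (min_le_right _ _)
      push_neg at hcase
      rw [div_le_div_iff₀ (by positivity) (by norm_num)]
      set s := x / Real.sqrt 2 with hsdef
      have hspos : 0 < s := by positivity
      have hx2 : x ^ 2 = 2 * s ^ 2 := by
        rw [hsdef]; field_simp; exact h2
      have hslb : (1.2360679 : ℝ) < s := by
        have : Real.sqrt 5 - 1 < s := by
          rw [hsdef, lt_div_iff₀ h2pos]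
          nlinarith [hcase]
        linarith [h5lb]
      have h1 : 5.545 * s ≤ (1 + s) ^ 2 + 1.22 * s ^ 2 := by
        nlinarith [hslb, sq_nonneg (s - 1.2360679)]
      have hmul := mul_le_mul h1 h1 (by positivity) (by positivity)
      nlinarith [hmul, hx2, hspos, sq_nonneg s]
  · rw [hcr, h5]
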